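/- Let k ∈ ℕ, let 0 = d₀ < d₁ < ⋯ < d_k be real numbers, and let p₀, p₁, …, p_k ∈ (0,1) with p₀ + p₁ + ⋯ + p_k = 1. Then there exist a compact metric space (S,d) and a Borel probability measure μ on S whose distance distribution equals θ = p₀·δ₀ + p₁·δ_{d₁} + ⋯ + p_k·δ_{d_k}. -/

import Mathlib

open MeasureTheory

open Finset in

lemma exists_weights {t : ℝ} (ht : t ∈ Set.Ioo (0:ℝ) 1) :
    ∃ (m : ℕ) (v : Fin (m + 2) → ℝ),
      (∀ i, 0 < v i) ∧ (∑ i, v i = 1) ∧ (∑ i, v i * v i = t) := by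
  obtain ⟨ht0, ht1⟩ := ht
  set m : ℕ := ⌈1 / t⌉₊ with hm
  have hm2 : (0:ℝ) < (m:ℝ) + 1 := by positivity
  have hlt : 1 / ((m:ℝ) + 2) < t := by
    rw [div_lt_iff₀ (by positivity)]
    have h1 : 1 / t ≤ (m : ℝ) := Nat.le_ceil _
    have : 1 / t < (m:ℝ) + 2 := by linarith
    rw [div_lt_iff₀ ht0] at this
    linarith [this]
  -- f a = a^2 + (1-a)^2/(m+1)
  set f : ℝ → ℝ := fun a => a * a + (1 - a) * (1 - a) / ((m:ℝ) + 1) with hf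
  have hfc : ContinuousOn f (Set.Icc (1/((m:ℝ)+2)) 1) := by
    apply Continuous.continuousOn; fun_prop
  have hfa : f (1/((m:ℝ)+2)) = 1/((m:ℝ)+2) := by
    rw [hf]; field_simp; ring
  have hfb : f 1 = 1 := by simp [hf]
  have hmem : t ∈ Set.Icc (f (1/((m:ℝ)+2))) (f 1) := by
    rw [hfa, hfb]; exact ⟨hlt.le, ht1.le⟩
  have hsub := intermediate_value_Icc (by nlinarith : 1/((m:ℝ)+2) ≤ 1) hfc
  obtain ⟨c, hc, hfc2⟩ := hsub hmem
  have hc0 : 0 < c := lt_of_lt_of_le (by positivity) hc.1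
  have hc1 : c < 1 := by
    rcases lt_or_eq_of_le hc.2 with h | h
    · exact h
    · exfalso; rw [h, hfb] at hfc2; linarith
  refine ⟨m, fun i => if i = 0 then c else (1 - c) / ((m:ℝ)+1), fun i => ?_, ?_, ?_⟩
  · dsimp only; split; · exact hc0
    · apply div_pos (by linarith) (by positivity)
  · rw [Fin.sum_univ_succ]
    simp only [if_pos rfl, Fin.succ_ne_zero, if_false]
    rw [Finset.sum_const, Finset.card_univ, Fintype.card_fin, nsmul_eq_mul]
    push_cast; field_simp; ring
  · rw [Fin.sum_univ_succ]
    simp only [if_pos rfl, Fin.succ_ne_zero, if_false]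
    rw [Finset.sum_const, Finset.card_univ, Fintype.card_fin, nsmul_eq_mul]
    rw [← hfc2, hf]; push_cast; field_simp


open Finset in
lemma aux_construction : ∀ (k : ℕ) (d : Fin (k+1) → ℝ), d 0 = 0 → StrictMono d →
    ∀ p : Fin (k+1) → ℝ, (∀ i, 0 < p i) → ∑ i, p i = 1 →
    ∃ (S : Type) (_ : Fintype S) (D : S → S → ℝ) (w : S → ℝ),
      (∀ x y, D x y = D y x) ∧ (∀ x, D x x = 0) ∧ (∀ x y, D x y = 0 → x = y) ∧
      (∀ x y, ∃ i, D x y = d i) ∧ (∀ x y z, D x z ≤ max (D x y) (D y z)) ∧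
      (∀ x, 0 < w x) ∧ (∑ x, w x = 1) ∧
      (∀ i, ∑ x, ∑ y, (if D x y = d i then w x * w y else 0) = p i) := by
  intro k
  induction k with
  | zero =>
    intro d hd0 _ p hp hsum
    have hp0 : p 0 = 1 := by simpa using hsum
    refine ⟨PUnit, inferInstance, fun _ _ => 0, fun _ => 1, fun _ _ => rfl, fun _ => rfl,
      fun x y _ => rfl, fun _ _ => ⟨0, hd0.symm⟩, fun _ _ _ => by simp, fun _ => one_pos, by simp, ?_⟩
    intro i
    fin_cases i
    simp [hd0, hp0]
  | succ k IH =>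
    intro d hd0 hmono p hp hsum
    set t : ℝ := 1 - p (Fin.last (k+1)) with hT
    have hcast := Fin.sum_univ_castSucc (f := p)
    have hsum' : ∑ i : Fin (k+1), p i.castSucc = t := by rw [hT, ← hsum, hcast]; ring
    have ht0 : 0 < t := by
      rw [← hsum']
      exact Finset.sum_pos (fun i _ => hp _) ⟨0, Finset.mem_univ 0⟩
    have ht1 : t < 1 := by rw [hT]; linarith [hp (Fin.last (k+1))]
    have hd0' : (fun i : Fin (k+1) => d i.castSucc) 0 = 0 := by simpa using hd0
    have hmono' : StrictMono (fun i : Fin (k+1) => d i.castSucc) :=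
      fun a b hab => hmono (by simpa using hab)
    obtain ⟨S', _, D', w', hDsymm, hDself, hDzero, hDval, hDultra, hwpos, hwsum, hfib⟩ :=
      IH _ hd0' hmono' (fun i => p i.castSucc / t) (fun i => div_pos (hp _) ht0)
        (by rw [← Finset.sum_div, hsum', div_self ht0.ne'])
    obtain ⟨m, v, hvpos, hvsum, hvsq⟩ := exists_weights ⟨ht0, ht1⟩
    have hcs_lt : ∀ i : Fin (k+1), d i.castSucc < d (Fin.last (k+1)) :=
      fun i => hmono (Fin.castSucc_lt_last i)
    have hD'le : ∀ x y, D' x y ≤ d (Fin.last (k+1)) := by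
      intro x y; obtain ⟨i, hi⟩ := hDval x y; rw [hi]; exact (hcs_lt i).le
    have hD'ne : ∀ x y, D' x y ≠ d (Fin.last (k+1)) := by
      intro x y; obtain ⟨i, hi⟩ := hDval x y; rw [hi]; exact (hcs_lt i).ne
    have hLne : d (Fin.last (k+1)) ≠ 0 := by
      rw [← hd0]
      refine (hmono ?_).ne'
      simp [Fin.lt_def]
    classical
    refine ⟨Fin (m+2) × S', inferInstance,
      fun a b => if a.1 = b.1 then D' a.2 b.2 else d (Fin.last (k+1)),
      fun a => v a.1 * w' a.2, ?_, ?_, ?_, ?_, ?_, ?_, ?_, ?_⟩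
    · intro x y
      dsimp only
      by_cases h : x.1 = y.1
      · rw [if_pos h, if_pos h.symm, hDsymm]
      · rw [if_neg h, if_neg (fun hh => h hh.symm)]
    · intro x; dsimp only; rw [if_pos rfl, hDself]
    · intro x y h
      dsimp only at h
      by_cases hh : x.1 = y.1
      · rw [if_pos hh] at h
        exact Prod.ext hh (hDzero _ _ h)
      · rw [if_neg hh] at h
        exact absurd h hLne
    · intro x y
      dsimp only
      by_cases hh : x.1 = y.1
      · rw [if_pos hh]; obtain ⟨i, hi⟩ := hDval x.2 y.2; exact ⟨i.castSucc, hi⟩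
      · rw [if_neg hh]; exact ⟨Fin.last (k+1), rfl⟩
    · intro x y z
      dsimp only
      by_cases hxz : x.1 = z.1
      · rw [if_pos hxz]
        by_cases hxy : x.1 = y.1
        · have hyz : y.1 = z.1 := hxy ▸ hxz
          rw [if_pos hxy, if_pos hyz]
          exact hDultra _ _ _
        · rw [if_neg hxy]
          exact le_max_of_le_left (hD'le _ _)
      · rw [if_neg hxz]
        by_cases hxy : x.1 = y.1
        · have hyz : ¬ y.1 = z.1 := fun h => hxz (hxy.trans h)
          rw [if_neg hyz]
          exact le_max_right _ _
        · rw [if_neg hxy]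
          exact le_max_left _ _
    · intro x; exact mul_pos (hvpos _) (hwpos _)
    · dsimp only
      rw [Fintype.sum_prod_type, ← hvsum]
      refine Finset.sum_congr rfl fun i _ => ?_
      dsimp only
      rw [← Finset.mul_sum, hwsum, mul_one]
    · intro j
      dsimp only
      have step1 : (∑ x : Fin (m+2) × S', ∑ y : Fin (m+2) × S',
          if (if x.1 = y.1 then D' x.2 y.2 else d (Fin.last (k+1))) = d j
          then v x.1 * w' x.2 * (v y.1 * w' y.2) else 0)
          = ∑ i, ∑ i', ∑ x : S', ∑ y : S',
            (if (if i = i' then D' x y else d (Fin.last (k+1))) = d j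
             then v i * w' x * (v i' * w' y) else 0) := by
        rw [Fintype.sum_prod_type]
        simp_rw [Fintype.sum_prod_type]
        exact Finset.sum_congr rfl fun i _ => Finset.sum_comm
      rw [step1]
      induction j using Fin.lastCases with
      | last =>
        have hpoint : ∀ (i i' : Fin (m+2)) (x y : S'),
            (if (if i = i' then D' x y else d (Fin.last (k+1))) = d (Fin.last (k+1))
             then v i * w' x * (v i' * w' y) else 0)
            = (if i = i' then 0 else v i * v i') * (w' x * w' y) := by
          intro i i' x y
          by_cases h : i = i'
          · rw [if_pos h, if_neg (hD'ne x y), if_pos h, zero_mul]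
          · rw [if_neg h, if_pos rfl, if_neg h]; ring
        simp_rw [hpoint, ← Finset.mul_sum, hwsum, mul_one]
        have hsplit : ∀ i i' : Fin (m+2), (if i = i' then (0:ℝ) else v i * v i')
            = v i * v i' - (if i = i' then v i * v i' else 0) := by
          intro i i'; split_ifs <;> ring
        simp_rw [hsplit]
        simp only [hwsum, mul_one]
        simp_rw [Finset.sum_sub_distrib, Finset.sum_ite_eq, Finset.mem_univ, if_true,
          ← Finset.mul_sum, hvsum, mul_one]
        rw [hvsq, hT]
        linarith [hvsum]
      | cast r =>
        have hne : d (Fin.last (k+1)) ≠ d r.castSucc := (hcs_lt r).ne'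
        have hpoint : ∀ (i i' : Fin (m+2)) (x y : S'),
            (if (if i = i' then D' x y else d (Fin.last (k+1))) = d r.castSucc
             then v i * w' x * (v i' * w' y) else 0)
            = (if i = i' then v i * v i' else 0)
              * (if D' x y = d r.castSucc then w' x * w' y else 0) := by
          intro i i' x y
          by_cases h : i = i'
          · rw [if_pos h, if_pos h]; split_ifs <;> ring
          · rw [if_neg h, if_neg hne, if_neg h, zero_mul]
        have hfib' := hfib r
        simp_rw [hpoint, ← Finset.mul_sum, hfib', ← Finset.sum_mul, Finset.sum_ite_eq,
          Finset.mem_univ, if_true]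
        rw [hvsq, mul_comm, div_mul_cancel₀ _ ht0.ne']

lemma fin_meas_apply {S : Type*} [Fintype S] [MeasurableSpace S] [MeasurableSingletonClass S]
    (ν : Measure S) {A : Set S} (hA : MeasurableSet A) :
    ν A = ∑ a, A.indicator (fun a => ν {a}) a := by
  conv_lhs => rw [← ν.sum_smul_dirac]
  rw [Measure.sum_apply _ hA, tsum_fintype]
  refine Finset.sum_congr rfl fun a _ => ?_
  rw [Measure.smul_apply, Measure.dirac_apply' _ hA, smul_eq_mul]
  classical
  by_cases h : a ∈ A <;> simp [Set.indicator, h]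


/-- Theorem 1 of the paper. Let `k ∈ ℕ`, let `0 = d₀ < d₁ < ⋯ < d_k` be
real numbers, and let `p₀, …, p_k ∈ (0, 1)` with `p₀ + ⋯ + p_k = 1`. Then there exist a
compact metric space `(S, d)` and a Borel probability measure `μ` on `S` whose distance
distribution (the pushforward of `μ ⊗ μ` under `(x, y) ↦ dist x y`) equals
`θ = p₀ • δ₀ + p₁ • δ_{d₁} + ⋯ + p_k • δ_{d_k}`. -/
theorem finitely_supported_distribution_is_feasible
    (k : ℕ) (d : Fin (k + 1) → ℝ) (hd0 : d 0 = 0) (hd_mono : StrictMono d)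
    (p : Fin (k + 1) → ℝ) (hp : ∀ i, p i ∈ Set.Ioo (0 : ℝ) 1) (hp_sum : ∑ i, p i = 1) :
    ∃ (S : Type) (_ : MetricSpace S) (_ : MeasurableSpace S) (_ : BorelSpace S)
      (μ : Measure S) (_ : IsProbabilityMeasure μ),
      CompactSpace S ∧
      (μ.prod μ).map (fun q : S × S => dist q.1 q.2)
        = ∑ i, ENNReal.ofReal (p i) • Measure.dirac (d i) := by
  classical
  obtain ⟨S, _, D, w, hsymm, hself, hzero, hval, hultra, hwpos, hwsum, hfib⟩ :=
    aux_construction k d hd0 hd_mono p (fun i => (hp i).1) hp_sum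
  have hnonneg : ∀ x y, 0 ≤ D x y := by
    intro x y; obtain ⟨i, hi⟩ := hval x y; rw [hi, ← hd0]
    exact hd_mono.monotone (Fin.zero_le i)
  letI : MetricSpace S :=
    { dist := D
      dist_self := hself
      dist_comm := hsymm
      dist_triangle := fun x y z => (hultra x y z).trans
        (max_le (le_add_of_nonneg_right (hnonneg y z)) (le_add_of_nonneg_left (hnonneg x y)))
      eq_of_dist_eq_zero := fun {x y} h => hzero x y h }
  letI : MeasurableSpace S := ⊤
  haveI : MeasurableSingletonClass S := ⟨fun _ => MeasurableSpace.measurableSet_top⟩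
  haveI : BorelSpace S := ⟨borel_eq_top_of_discrete.symm⟩
  set μ : Measure S := ∑ x : S, ENNReal.ofReal (w x) • Measure.dirac x with hμ
  have hμs : ∀ a : S, μ {a} = ENNReal.ofReal (w a) := by
    intro a
    rw [hμ, Measure.finset_sum_apply]
    rw [Finset.sum_eq_single a]
    · rw [Measure.smul_apply, Measure.dirac_apply_of_mem (Set.mem_singleton a),
        smul_eq_mul, mul_one]
    · intro b _ hb
      rw [Measure.smul_apply, Measure.dirac_apply' _ (measurableSet_singleton a),
        Set.indicator_of_notMem (by simpa using hb), smul_eq_mul, mul_zero]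
    · intro h; exact absurd (Finset.mem_univ a) h
  haveI hprob : IsProbabilityMeasure μ := by
    constructor
    rw [hμ, Measure.finset_sum_apply]
    simp only [Measure.smul_apply, measure_univ, smul_eq_mul, mul_one]
    rw [← ENNReal.ofReal_sum_of_nonneg (fun i _ => (hwpos i).le), hwsum, ENNReal.ofReal_one]
  have hf : Measurable (fun q : S × S => dist q.1 q.2) := measurable_of_countable _
  have hdist : ∀ x y : S, dist x y = D x y := fun _ _ => rfl
  refine ⟨S, inferInstance, inferInstance, inferInstance, μ, hprob, inferInstance, ?_⟩
  refine Measure.ext fun s hs => ?_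
  rw [Measure.map_apply hf hs, fin_meas_apply _ (hf hs), Measure.finset_sum_apply]
  have hprodsing : ∀ a : S × S, (μ.prod μ) {a} = ENNReal.ofReal (w a.1) * ENNReal.ofReal (w a.2) := by
    intro a
    rw [← Set.singleton_prod_singleton, Measure.prod_prod, hμs, hμs]
  -- RHS
  have hRHS : ∀ i : Fin (k+1), (ENNReal.ofReal (p i) • Measure.dirac (d i)) s
      = ENNReal.ofReal (p i) * s.indicator 1 (d i) := by
    intro i
    rw [Measure.smul_apply, Measure.dirac_apply' _ hs, smul_eq_mul]
  simp only [hRHS]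
  -- LHS pointwise
  simp only [Set.indicator_apply, Set.mem_preimage, hprodsing, hdist]
  rw [Fintype.sum_prod_type]
  have hpoint : ∀ x y : S, (if D x y ∈ s then ENNReal.ofReal (w x) * ENNReal.ofReal (w y) else 0)
      = ∑ i, if D x y = d i then ENNReal.ofReal (w x * w y) * s.indicator 1 (d i) else 0 := by
    intro x y
    obtain ⟨i₀, hi₀⟩ := hval x y
    rw [Finset.sum_eq_single i₀]
    · rw [if_pos hi₀, hi₀, ENNReal.ofReal_mul (hwpos x).le]
      by_cases hm : d i₀ ∈ s
      · rw [if_pos hm, Set.indicator_of_mem hm, Pi.one_apply, mul_one]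
      · rw [if_neg hm, Set.indicator_of_notMem hm, mul_zero]
    · intro b _ hb
      rw [if_neg]
      rw [hi₀]
      exact fun h => hb ((hd_mono.injective h).symm)
    · intro h; exact absurd (Finset.mem_univ i₀) h
  simp_rw [hpoint]
  rw [show (∑ x : S, ∑ y : S, ∑ i, if D x y = d i
        then ENNReal.ofReal (w x * w y) * s.indicator 1 (d i) else 0)
      = ∑ x : S, ∑ i, ∑ y : S, (if D x y = d i
        then ENNReal.ofReal (w x * w y) * s.indicator 1 (d i) else 0)
      from Finset.sum_congr rfl fun x _ => Finset.sum_comm, Finset.sum_comm]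
  refine Finset.sum_congr rfl fun i _ => ?_
  have hfactor : ∀ x y : S, (if D x y = d i
        then ENNReal.ofReal (w x * w y) * s.indicator 1 (d i) else 0)
      = ENNReal.ofReal (if D x y = d i then w x * w y else 0) * s.indicator 1 (d i) := by
    intro x y
    split_ifs <;> simp
  have hnn : ∀ x y : S, 0 ≤ (if D x y = d i then w x * w y else 0) := by
    intro x y
    split_ifs with h
    · exact mul_nonneg (hwpos _).le (hwpos _).le
    · exact le_refl 0
  simp_rw [hfactor, ← Finset.sum_mul]
  rw [show (∑ x : S, ∑ y : S, ENNReal.ofReal (if D x y = d i then w x * w y else 0))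
      = ENNReal.ofReal (∑ x : S, ∑ y : S, (if D x y = d i then w x * w y else 0)) by
    rw [ENNReal.ofReal_sum_of_nonneg (fun x _ => Finset.sum_nonneg fun y _ => hnn x y)]
    exact Finset.sum_congr rfl fun x _ =>
      (ENNReal.ofReal_sum_of_nonneg (fun y _ => hnn x y)).symm]
  rw [hfib i]
  rw [Set.indicator_apply]
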